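/- For integers n, m ≥ 5, the set V(K_n × K_m) \ {(1,1),(2,2),(3,3),(4,4)} is a total mutual-visibility set of K_n × K_m; consequently μ_t(K_n × K_m) ≥ nm − 4. -/

import Mathlib

namespace MutualVisibility

open SimpleGraph

variable {V W : Type*}

/-- `x` and `y` are `X`-visible in `G`: there is a shortest `x,y`-path all of whose
internal vertices avoid `X`. -/
def Visible (G : SimpleGraph V) (X : Set V) (x y : V) : Prop :=
  ∃ p : G.Walk x y, p.length = G.dist x y ∧ ∀ v ∈ p.support, v ≠ x → v ≠ y → v ∉ X

/-- `X` is a mutual-visibility set: any two vertices of `X` are `X`-visible. -/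
def IsMutualVisSet (G : SimpleGraph V) (X : Set V) : Prop :=
  ∀ x ∈ X, ∀ y ∈ X, Visible G X x y

/-- outer mutual-visibility set -/
def IsOuterMutualVisSet (G : SimpleGraph V) (X : Set V) : Prop :=
  IsMutualVisSet G X ∧ ∀ x ∈ X, ∀ y ∉ X, Visible G X x y

/-- dual mutual-visibility set -/
def IsDualMutualVisSet (G : SimpleGraph V) (X : Set V) : Prop :=
  IsMutualVisSet G X ∧ ∀ x ∉ X, ∀ y ∉ X, Visible G X x y

/-- total mutual-visibility set -/
def IsTotalMutualVisSet (G : SimpleGraph V) (X : Set V) : Prop :=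
  ∀ x y : V, Visible G X x y

/-- mutual-visibility number μ(G) -/
noncomputable def mu (G : SimpleGraph V) : ℕ :=
  sSup {k | ∃ X : Set V, IsMutualVisSet G X ∧ X.ncard = k}

/-- outer mutual-visibility number μ_o(G) -/
noncomputable def muOuter (G : SimpleGraph V) : ℕ :=
  sSup {k | ∃ X : Set V, IsOuterMutualVisSet G X ∧ X.ncard = k}

/-- dual mutual-visibility number μ_d(G) -/
noncomputable def muDual (G : SimpleGraph V) : ℕ :=
  sSup {k | ∃ X : Set V, IsDualMutualVisSet G X ∧ X.ncard = k}

/-- total mutual-visibility number μ_t(G) -/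
noncomputable def muTotal (G : SimpleGraph V) : ℕ :=
  sSup {k | ∃ X : Set V, IsTotalMutualVisSet G X ∧ X.ncard = k}

/-- `H` contains a subgraph copy of `F`. -/
def ContainsCopy (F : SimpleGraph W) (H : SimpleGraph V) : Prop :=
  ∃ f : W → V, Function.Injective f ∧ ∀ a b, F.Adj a b → H.Adj (f a) (f b)

/-- The Turán number ex(n; F): max number of edges of an `n`-vertex graph with no copy of `F`. -/
noncomputable def exNum (n : ℕ) (F : SimpleGraph W) : ℕ :=
  sSup {k | ∃ H : SimpleGraph (Fin n), ¬ ContainsCopy F H ∧ H.edgeSet.ncard = k}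

/-- The direct (tensor/categorical) product of graphs. -/
def directProd (G : SimpleGraph V) (H : SimpleGraph W) : SimpleGraph (V × W) where
  Adj x y := G.Adj x.1 y.1 ∧ H.Adj x.2 y.2
  symm := ⟨fun _ _ h => ⟨h.1.symm, h.2.symm⟩⟩
  loopless := ⟨fun x h => G.irrefl h.1⟩

/-- The join `G + H` of two graphs. -/
def graphJoin (G : SimpleGraph V) (H : SimpleGraph W) : SimpleGraph (V ⊕ W) where
  Adj u v := match u, v with
    | Sum.inl a, Sum.inl b => G.Adj a b
    | Sum.inr a, Sum.inr b => H.Adj a b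
    | _, _ => True
  symm := ⟨fun u v => match u, v with
    | Sum.inl _, Sum.inl _ => fun h => G.adj_symm h
    | Sum.inr _, Sum.inr _ => fun h => H.adj_symm h
    | Sum.inl _, Sum.inr _ => fun _ => trivial
    | Sum.inr _, Sum.inl _ => fun _ => trivial⟩
  loopless := ⟨fun u => match u with
    | Sum.inl a => G.irrefl
    | Sum.inr a => H.irrefl⟩

/-- A big-μ graph: `G = (K_1 ∪ K_t) + H` for some `t ≥ 0` and some graph `H`. -/
def IsBigMu {V : Type} (G : SimpleGraph V) : Prop :=
  ∃ (t : ℕ) (W : Type) (H : SimpleGraph W),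
    Nonempty (G ≃g graphJoin ((⊤ : SimpleGraph (Fin 1)) ⊕g (⊤ : SimpleGraph (Fin t))) H)

/-- A cograph: a graph with no induced path on four vertices. -/
def IsCograph (G : SimpleGraph V) : Prop :=
  ¬ ∃ f : Fin 4 → V, Function.Injective f ∧
      ∀ a b, (pathGraph 4).Adj a b ↔ G.Adj (f a) (f b)

/-- The Petersen graph, realized as the Kneser graph K(5,2). -/
def petersen : SimpleGraph {s : Finset (Fin 5) // s.card = 2} where
  Adj a b := Disjoint a.1 b.1
  symm := ⟨fun _ _ h => h.symm⟩
  loopless := by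
    constructor
    rintro ⟨s, hs⟩ h
    rw [disjoint_self, Finset.bot_eq_empty] at h
    subst h
    simp at hs

lemma exists_avoid (a b c : ℕ) : ∃ k, k < 4 ∧ k ≠ a ∧ k ≠ b ∧ k ≠ c := by
  have h : ∃ k ∈ Finset.range 4, k ∉ ({a, b, c} : Finset ℕ) := by
    by_contra h
    push_neg at h
    have hsub : Finset.range 4 ⊆ ({a, b, c} : Finset ℕ) := fun k hk => h k hk
    have h1 := Finset.card_le_card hsub
    have h2 : ({a, b, c} : Finset ℕ).card ≤ 3 := by
      calc ({a, b, c} : Finset ℕ).card ≤ ({b, c} : Finset ℕ).card + 1 :=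
            Finset.card_insert_le _ _
        _ ≤ (({c} : Finset ℕ).card + 1) + 1 := by
            have := Finset.card_insert_le b ({c} : Finset ℕ); omega
        _ ≤ 3 := by simp
    simp [Finset.card_range] at h1
    omega
  obtain ⟨k, hk, hk2⟩ := h
  simp only [Finset.mem_range] at hk
  simp only [Finset.mem_insert, Finset.mem_singleton, not_or] at hk2
  exact ⟨k, hk, hk2.1, hk2.2.1, hk2.2.2⟩

theorem total_mv_set_directProd_complete (n m : ℕ) (hn : 5 ≤ n) (hm : 5 ≤ m) :
    IsTotalMutualVisSet (directProd (⊤ : SimpleGraph (Fin n)) (⊤ : SimpleGraph (Fin m)))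
      (({((⟨0, by omega⟩ : Fin n), (⟨0, by omega⟩ : Fin m)),
         (⟨1, by omega⟩, ⟨1, by omega⟩),
         (⟨2, by omega⟩, ⟨2, by omega⟩),
         (⟨3, by omega⟩, ⟨3, by omega⟩)} : Set (Fin n × Fin m))ᶜ) ∧
    n * m - 4 ≤ muTotal (directProd (⊤ : SimpleGraph (Fin n)) (⊤ : SimpleGraph (Fin m))) := by
  set G := directProd (⊤ : SimpleGraph (Fin n)) (⊤ : SimpleGraph (Fin m)) with hG
  set D : Set (Fin n × Fin m) :=
      ({((⟨0, by omega⟩ : Fin n), (⟨0, by omega⟩ : Fin m)),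
         (⟨1, by omega⟩, ⟨1, by omega⟩),
         (⟨2, by omega⟩, ⟨2, by omega⟩),
         (⟨3, by omega⟩, ⟨3, by omega⟩)} : Set (Fin n × Fin m)) with hD
  have hadj : ∀ x y : Fin n × Fin m, G.Adj x y ↔ x.1 ≠ y.1 ∧ x.2 ≠ y.2 := by
    intro x y
    simp [hG, directProd, top_adj]
  have hDiag : ∀ (k : ℕ) (hkn : k < n) (hkm : k < m), k < 4 →
      ((⟨k, hkn⟩ : Fin n), (⟨k, hkm⟩ : Fin m)) ∈ D := by
    intro k hkn hkm hk
    interval_cases k <;> simp [hD]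
  have main : IsTotalMutualVisSet G Dᶜ := by
    intro x y
    by_cases hxy : x = y
    · subst hxy
      refine ⟨SimpleGraph.Walk.nil, by simp [SimpleGraph.dist_self], ?_⟩
      intro v hv hvx _
      simp at hv
      exact absurd hv hvx
    by_cases ha : G.Adj x y
    · refine ⟨SimpleGraph.Walk.cons ha SimpleGraph.Walk.nil, ?_, ?_⟩
      · simp [(SimpleGraph.dist_eq_one_iff_adj).mpr ha]
      · intro v hv hvx hvy
        simp [SimpleGraph.Walk.support_cons] at hv
        rcases hv with h | h
        · exact absurd h hvx
        · exact absurd h hvy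
    · -- distance 2 case
      rw [hadj] at ha
      push_neg at ha
      have hcase : x.1 = y.1 ∨ x.2 = y.2 := by
        by_contra h
        push_neg at h
        exact (h.2 (ha h.1))
      have hkey : ∃ z : Fin n × Fin m, z ∈ D ∧ G.Adj x z ∧ G.Adj z y := by
        rcases hcase with h1 | h2
        · obtain ⟨k, hk4, hka, hkb, hkc⟩ := exists_avoid x.1.val x.2.val y.2.val
          refine ⟨((⟨k, by omega⟩ : Fin n), (⟨k, by omega⟩ : Fin m)),
            hDiag k (by omega) (by omega) hk4, ?_, ?_⟩
          · rw [hadj]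
            exact ⟨fun h => hka (by simpa [Fin.ext_iff] using h.symm),
                   fun h => hkb (by simpa [Fin.ext_iff] using h.symm)⟩
          · rw [hadj]
            refine ⟨fun h => hka ?_, fun h => hkc (by simpa [Fin.ext_iff] using h)⟩
            rw [h1]
            simpa [Fin.ext_iff] using h
        · obtain ⟨k, hk4, hka, hkb, hkc⟩ := exists_avoid x.2.val x.1.val y.1.val
          refine ⟨((⟨k, by omega⟩ : Fin n), (⟨k, by omega⟩ : Fin m)),
            hDiag k (by omega) (by omega) hk4, ?_, ?_⟩
          · rw [hadj]
            exact ⟨fun h => hkb (by simpa [Fin.ext_iff] using h.symm),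
                   fun h => hka (by simpa [Fin.ext_iff] using h.symm)⟩
          · rw [hadj]
            refine ⟨fun h => hkc (by simpa [Fin.ext_iff] using h), fun h => hka ?_⟩
            rw [h2]
            simpa [Fin.ext_iff] using h
      obtain ⟨z, hzD, h1, h2⟩ := hkey
      set p : G.Walk x y := SimpleGraph.Walk.cons h1 (SimpleGraph.Walk.cons h2 SimpleGraph.Walk.nil) with hp
      have hlen : p.length = 2 := by simp [hp]
      have hdle : G.dist x y ≤ 2 := hlen ▸ SimpleGraph.dist_le p
      have hreach : G.Reachable x y := p.reachable
      have hd0 : G.dist x y ≠ 0 := fun h => hxy (hreach.dist_eq_zero_iff.mp h)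
      have hd1 : G.dist x y ≠ 1 := by
        intro h
        have := SimpleGraph.dist_eq_one_iff_adj.mp h
        rw [hadj] at this
        exact (hcase.elim (fun h => this.1 h) (fun h => this.2 h))
      refine ⟨p, by omega, ?_⟩
      intro v hv hvx hvy
      simp [hp, SimpleGraph.Walk.support_cons] at hv
      rcases hv with h | h | h
      · exact absurd h hvx
      · simpa [h] using hzD
      · exact absurd h hvy
  refine ⟨main, ?_⟩
  have hDfin : D.Finite := by
    apply Set.Finite.insert; apply Set.Finite.insert; apply Set.Finite.insert
    exact Set.finite_singleton _
  have hDcard : D.ncard = 4 := by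
    rw [hD]
    rw [Set.ncard_insert_of_notMem (by simp [Prod.ext_iff, Fin.ext_iff]) (by
      apply Set.Finite.insert; apply Set.Finite.insert; exact Set.finite_singleton _)]
    rw [Set.ncard_insert_of_notMem (by simp [Prod.ext_iff, Fin.ext_iff]) (by
      apply Set.Finite.insert; exact Set.finite_singleton _)]
    rw [Set.ncard_insert_of_notMem (by simp [Prod.ext_iff, Fin.ext_iff])
      (Set.finite_singleton _)]
    simp
  have hcardV : Nat.card (Fin n × Fin m) = n * m := by simp
  have hXcard : (Dᶜ : Set (Fin n × Fin m)).ncard = n * m - 4 := by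
    have := Set.ncard_add_ncard_compl D
    omega
  apply le_csSup
  · refine ⟨n * m, ?_⟩
    rintro k ⟨X, _, rfl⟩
    calc X.ncard ≤ (Set.univ : Set (Fin n × Fin m)).ncard :=
          Set.ncard_le_ncard (Set.subset_univ X) (Set.toFinite _)
      _ = n * m := by rw [Set.ncard_univ]; simp
  · exact ⟨Dᶜ, main, hXcard⟩
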